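/- Let k_1 ≤ k_2 ≤ ... ≤ k_n be real numbers and 1 ≤ p ≤ n/2 an integer. Suppose that for some integer q with p ≤ min{q, n−q} one has k_1 + ... + k_q ≥ 0 (q-nonnegativity). Then (∑_{i=1}^{n-p} k_i)(∑_{i=n-p+1}^{n} k_i) ≥ (∑_{i=1}^{p} k_i)(∑_{i=p+1}^{n} k_i). -/

import Mathlib

open Finset

/-- for ordered reals `k 1 ≤ ⋯ ≤ k n` that are `q`-nonnegative
(`k 1 + ⋯ + k q ≥ 0`) and `1 ≤ p ≤ min {q, n - q}`, one has
`(k 1 + ⋯ + k (n-p)) * (k (n-p+1) + ⋯ + k n) ≥ (k 1 + ⋯ + k p) * (k (p+1) + ⋯ + k n)`. -/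
theorem stmt1 (n p q : ℕ) (k : ℕ → ℝ) (hk : MonotoneOn k (Set.Icc 1 n))
    (hp1 : 1 ≤ p) (hpq : p ≤ q) (hpnq : p + q ≤ n)
    (hqnonneg : 0 ≤ ∑ i ∈ Icc 1 q, k i) :
    (∑ i ∈ Icc 1 p, k i) * (∑ i ∈ Icc (p + 1) n, k i) ≤
      (∑ i ∈ Icc 1 (n - p), k i) * (∑ i ∈ Icc (n - p + 1) n, k i) := by
  have e1 : Icc 1 p = Ioc 0 p := by ext x; simp; omega
  have e2 : Icc (p + 1) n = Ioc p n := by ext x; simp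
  have e3 : Icc 1 (n - p) = Ioc 0 (n - p) := by ext x; simp; omega
  have e4 : Icc (n - p + 1) n = Ioc (n - p) n := by ext x; simp
  have e5 : Icc 1 q = Ioc 0 q := by ext x; simp; omega
  rw [e1, e2, e3, e4]
  rw [e5] at hqnonneg
  set A := ∑ i ∈ Ioc 0 p, k i with hA
  set B := ∑ i ∈ Ioc (n - p) n, k i with hB
  set M := ∑ i ∈ Ioc p (n - p), k i with hM
  -- k p bounds
  have hXub' : A ≤ (p : ℝ) * k p := by
    have := Finset.sum_le_card_nsmul (Ioc 0 p) k (k p)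
      (fun i hi => by
        simp only [mem_Ioc] at hi
        exact hk ⟨by omega, by omega⟩ ⟨by omega, by omega⟩ hi.2)
    rwa [Nat.card_Ioc, Nat.sub_zero, nsmul_eq_mul] at this
  have hYlb : ((q : ℝ) - p) * k p ≤ ∑ i ∈ Ioc p q, k i := by
    have := Finset.card_nsmul_le_sum (Ioc p q) k (k p)
      (fun i hi => by
        simp only [mem_Ioc] at hi
        exact hk ⟨by omega, by omega⟩ ⟨by omega, by omega⟩ (by omega))
    rw [Nat.card_Ioc, nsmul_eq_mul] at this
    calc ((q : ℝ) - p) * k p = ((q - p : ℕ) : ℝ) * k p := by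
          rw [Nat.cast_sub hpq]
      _ ≤ _ := this
  have hXY : A + ∑ i ∈ Ioc p q, k i = ∑ i ∈ Ioc 0 q, k i :=
    Finset.sum_Ioc_consecutive k (by omega) hpq
  -- sum over Ioc p q is nonnegative
  have hY : 0 ≤ ∑ i ∈ Ioc p q, k i := by
    nlinarith [hqnonneg, hXY, hXub', hYlb, hp1,
      (by exact_mod_cast hp1 : (1 : ℝ) ≤ (p : ℝ)),
      (by exact_mod_cast hpq : (p : ℝ) ≤ (q : ℝ))]
  -- k q ≥ 0
  have hkq : 0 ≤ k q := by
    have hub : ∑ i ∈ Ioc 0 q, k i ≤ (q : ℝ) * k q := by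
      have := Finset.sum_le_card_nsmul (Ioc 0 q) k (k q)
        (fun i hi => by
          simp only [mem_Ioc] at hi
          exact hk ⟨by omega, by omega⟩ ⟨by omega, by omega⟩ hi.2)
      rwa [Nat.card_Ioc, Nat.sub_zero, nsmul_eq_mul] at this
    nlinarith [(by exact_mod_cast Nat.one_le_iff_ne_zero.mpr (by omega) : (1:ℝ) ≤ (q:ℝ))]
  have hZ : 0 ≤ ∑ i ∈ Ioc q (n - p), k i := by
    apply Finset.sum_nonneg
    intro i hi
    simp only [mem_Ioc] at hi
    exact hkq.trans (hk ⟨by omega, by omega⟩ ⟨by omega, by omega⟩ (by omega))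
  have hMnn : 0 ≤ M := by
    have : ∑ i ∈ Ioc p q, k i + ∑ i ∈ Ioc q (n - p), k i = M :=
      Finset.sum_Ioc_consecutive k hpq (by omega)
    linarith
  -- A ≤ B
  have hAB : A ≤ B := by
    have hset : Ioc (n - p) n = (Ioc 0 p).map
        ⟨fun i => i + (n - p), add_left_injective (n - p)⟩ := by
      ext x
      simp only [mem_map, mem_Ioc, Function.Embedding.coeFn_mk]
      constructor
      · rintro ⟨h1, h2⟩; exact ⟨x - (n - p), ⟨by omega, by omega⟩, by omega⟩
      · rintro ⟨y, ⟨h1, h2⟩, rfl⟩; omega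
    have hmap : B = ∑ i ∈ Ioc 0 p, k (i + (n - p)) := by
      rw [hB, hset, Finset.sum_map]
      simp only [Function.Embedding.coeFn_mk]
    rw [hmap]
    apply Finset.sum_le_sum
    intro i hi
    simp only [mem_Ioc] at hi
    exact hk ⟨by omega, by omega⟩ ⟨by omega, by omega⟩ (by omega)
  -- split the two big sums
  have hs1 : ∑ i ∈ Ioc p n, k i = M + B := by
    rw [hM, hB]; exact (Finset.sum_Ioc_consecutive k (by omega) (by omega)).symm
  have hs2 : ∑ i ∈ Ioc 0 (n - p), k i = A + M := by
    rw [hA, hM]; exact (Finset.sum_Ioc_consecutive k (by omega) (by omega)).symm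
  rw [hs1, hs2]
  nlinarith [mul_le_mul_of_nonneg_left hAB hMnn]
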